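/- Function value convergence at the last iterate of iBPG: under the standing assumptions, if (1/k)Σ_{i=0}^{k-1} i·η_i(‖x̃^{i+1}‖+‖x̃^i‖+1) → 0, (1/k)Σ_{i=0}^{k-1} i·μ_i → 0 and (1/k)Σ_{i=0}^{k-1} i·ν_i → 0, then F(x̃^k) → F* as k → ∞, where F* := inf{F(x) : x ∈ Q} > −∞. -/

import Mathlib

open Filter Topology RealInnerProductSpace

/-- The Bregman distance associated with the kernel `φ` whose gradient map is `gφ`. -/
noncomputable def breg {E : Type*} [NormedAddCommGroup E] [InnerProductSpace ℝ E]
    (φ : E → ℝ) (gφ : E → E) (x y : E) : ℝ :=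
  φ x - φ y - ⟪gφ y, x - y⟫

/-- The ν-subdifferential of `P` (a proper function with effective domain `domP`) at `x`. -/
def nuSubdiff {E : Type*} [NormedAddCommGroup E] [InnerProductSpace ℝ E]
    (P : E → ℝ) (domP : Set E) (ν : ℝ) (x : E) : Set E :=
  {d : E | ∀ u ∈ domP, P x + ⟪d, u - x⟫ - ν ≤ P u}

open Classical in
/-- Extension of a real-valued function with effective domain `dom` to an `EReal`-valued
function taking the value `⊤` outside `dom`. -/
noncomputable def extFun {E : Type*} (g : E → ℝ) (dom : Set E) : E → EReal :=
  fun x => if x ∈ dom then (g x : EReal) else ⊤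

/-- `φ` (with effective domain `domφ` and gradient map `gφ`) is essentially smooth. -/
def EssentiallySmooth {E : Type*} [NormedAddCommGroup E] [InnerProductSpace ℝ E]
    [FiniteDimensional ℝ E] (φ : E → ℝ) (domφ : Set E) (gφ : E → E) : Prop :=
  (interior domφ).Nonempty ∧
  (∀ x ∈ interior domφ, HasGradientAt φ (gφ x) x) ∧
  ∀ (u : ℕ → E) (u₀ : E), (∀ n, u n ∈ interior domφ) →
    Tendsto u atTop (𝓝 u₀) → u₀ ∈ frontier (interior domφ) →
    Tendsto (fun n => ‖gφ (u n)‖) atTop atTop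

/-- The standing assumptions (Assumption A) for the problem `inf {P x + f x : x ∈ Q}`. -/
structure Standing {E : Type*} [NormedAddCommGroup E] [InnerProductSpace ℝ E]
    [FiniteDimensional ℝ E] (Q domφ domP domf X : Set E)
    (φ P f : E → ℝ) (gφ gf : E → E) (L : ℝ) : Prop where
  hQclosed : IsClosed Q
  hQconv : Convex ℝ Q
  hQint : (interior Q).Nonempty
  hφconv : ConvexOn ℝ domφ φ
  hφstrict : StrictConvexOn ℝ (interior domφ) φ
  hφsmooth : EssentiallySmooth φ domφ gφ
  hφQ : closure domφ = Q
  hPne : domP.Nonempty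
  hPconv : ConvexOn ℝ domP P
  hPclosed : LowerSemicontinuous (extFun P domP)
  hPQ : (domP ∩ interior Q).Nonempty
  hfconv : ConvexOn ℝ domf f
  hfclosed : LowerSemicontinuous (extFun f domf)
  hfdom : domφ ⊆ domf
  hfgrad : ∀ x ∈ interior domφ, HasGradientAt f (gf x) x
  hXclosed : IsClosed X
  hXconv : Convex ℝ X
  hXsup : domP ∩ domφ ⊆ X
  hLnn : 0 ≤ L
  hrel : ∀ u ∈ interior domφ ∩ X, ∀ v ∈ domφ ∩ X,
    f v ≤ f u + ⟪gf u, v - u⟫ + L * breg φ gφ v u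

/-- The iBPG iterates with inexactness tolerance sequences `η`, `μ`, `ν`. -/
structure IBPGIter {E : Type*} [NormedAddCommGroup E] [InnerProductSpace ℝ E]
    [FiniteDimensional ℝ E] (domφ domP X : Set E) (φ P : E → ℝ) (gφ gf : E → E) (L : ℝ)
    (η μ ν : ℕ → ℝ) (x xt : ℕ → E) : Prop where
  hη : ∀ k, 0 ≤ η k
  hμ : ∀ k, 0 ≤ μ k
  hν : ∀ k, 0 ≤ ν k
  hx : ∀ k, x k ∈ X ∩ interior domφ
  hxt : ∀ k, xt k ∈ domP ∩ domφ
  hinex : ∀ k, ∃ d ∈ nuSubdiff P domP (ν k) (xt (k+1)),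
    ‖d + gf (x k) + L • (gφ (x (k+1)) - gφ (x k))‖ ≤ η k
  hdist : ∀ k, breg φ gφ (xt (k+1)) (x (k+1)) ≤ μ k

/-- Gradient inequality for a convex function at a point where it has a gradient. -/
lemma grad_ineq {E : Type*} [NormedAddCommGroup E] [InnerProductSpace ℝ E]
    [FiniteDimensional ℝ E]
    {s : Set E} {f : E → ℝ} (hf : ConvexOn ℝ s f) {x g : E} (hx : x ∈ s)
    (hg : HasGradientAt f g x) {u : E} (hu : u ∈ s) :
    f x + ⟪g, u - x⟫ ≤ f u := by
  set v := u - x with hv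
  have hc : HasDerivAt (fun t : ℝ => f (x + t • v)) ⟪g, v⟫ 0 := by
    have h1 : HasDerivAt (fun t : ℝ => x + t • v) v 0 := by
      simpa using ((hasDerivAt_id (0:ℝ)).smul_const v).const_add x
    have h2 : HasFDerivAt f (InnerProductSpace.toDual ℝ E g) (x + (0:ℝ) • v) := by
      simpa using hg.hasFDerivAt
    exact (by simpa using h2.comp_hasDerivAt 0 h1 : HasDerivAt (f ∘ fun t : ℝ => x + t • v) ⟪g, v⟫ 0)
  have key : ∀ t ∈ Set.Ioc (0:ℝ) 1, slope (fun t : ℝ => f (x + t • v)) 0 t ≤ f u - f x := by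
    intro t ht
    have hcomb : x + t • v = (1 - t) • x + t • u := by rw [hv]; module
    have hcv := hf.2 hx hu (by linarith [ht.2] : (0:ℝ) ≤ 1 - t) ht.1.le (by ring)
    simp only [smul_eq_mul] at hcv
    rw [slope_def_field]
    simp only [sub_zero, zero_smul, add_zero]
    rw [div_le_iff₀ ht.1, hcomb]
    nlinarith [hcv]
  have hslope : Tendsto (slope (fun t : ℝ => f (x + t • v)) 0) (𝓝[>] (0:ℝ)) (𝓝 ⟪g, v⟫) :=
    (hasDerivAt_iff_tendsto_slope.mp hc).mono_left
      (nhdsWithin_mono 0 (fun y hy => ne_of_gt hy))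
  have hle : ⟪g, v⟫ ≤ f u - f x :=
    le_of_tendsto hslope (Filter.eventually_of_mem (Ioc_mem_nhdsGT_of_mem ⟨le_rfl, one_pos⟩) key)
  linarith

/-- A weighted Cesàro-vanishing condition implies the unweighted one. -/
lemma cesaro_of_weighted (b : ℕ → ℝ) (hb : ∀ i, 0 ≤ b i)
    (h : Tendsto (fun k : ℕ => (k:ℝ)⁻¹ * ∑ i ∈ Finset.range k, (i:ℝ) * b i) atTop (𝓝 0)) :
    Tendsto (fun k : ℕ => (k:ℝ)⁻¹ * ∑ i ∈ Finset.range k, b i) atTop (𝓝 0) := by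
  have hsum : ∀ k : ℕ, ∑ i ∈ Finset.range k, b i ≤ b 0 + ∑ i ∈ Finset.range k, (i:ℝ) * b i := by
    intro k
    induction k with
    | zero => simpa using hb 0
    | succ k ih =>
      rw [Finset.sum_range_succ, Finset.sum_range_succ]
      rcases Nat.eq_zero_or_pos k with hk | hk
      · subst hk; simp
      · have : b k ≤ (k:ℝ) * b k := by
          nlinarith [hb k, (by exact_mod_cast hk : (1:ℝ) ≤ (k:ℝ))]
        linarith
  refine squeeze_zero (g := fun k : ℕ => (k:ℝ)⁻¹ * b 0
    + (k:ℝ)⁻¹ * ∑ i ∈ Finset.range k, (i:ℝ) * b i) (fun k => ?_) (fun k => ?_) ?_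
  · exact mul_nonneg (by positivity) (Finset.sum_nonneg fun i _ => hb i)
  · calc (k:ℝ)⁻¹ * ∑ i ∈ Finset.range k, b i
        ≤ (k:ℝ)⁻¹ * (b 0 + ∑ i ∈ Finset.range k, (i:ℝ) * b i) :=
          mul_le_mul_of_nonneg_left (hsum k) (by positivity)
      _ = (k:ℝ)⁻¹ * b 0 + (k:ℝ)⁻¹ * ∑ i ∈ Finset.range k, (i:ℝ) * b i := by ring
  · have h0 : Tendsto (fun k : ℕ => (k:ℝ)⁻¹ * b 0) atTop (𝓝 0) := by
      simpa using tendsto_inv_atTop_nhds_zero_nat.mul_const (b 0)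
    simpa using h0.add h

/-- For a convex set with nonempty interior, the interior of the closure is the interior. -/
lemma interior_closure_subset_interior_of_convex {E : Type*} [NormedAddCommGroup E]
    [NormedSpace ℝ E] {s : Set E} (hs : Convex ℝ s) {x₀ : E} (hx₀ : x₀ ∈ interior s) :
    interior (closure s) ⊆ interior s := by
  intro y hy
  obtain ⟨ε, hε, hball⟩ := Metric.mem_nhds_iff.mp (mem_interior_iff_mem_nhds.mp hy)
  set t : ℝ := ε / (2 * (‖y - x₀‖ + 1)) with ht
  have hnorm : (0:ℝ) ≤ ‖y - x₀‖ := norm_nonneg _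
  have ht0 : 0 < t := by positivity
  have hp : y + t • (y - x₀) ∈ Metric.ball y ε := by
    rw [Metric.mem_ball, dist_eq_norm]
    have : ‖y + t • (y - x₀) - y‖ = t * ‖y - x₀‖ := by
      rw [add_sub_cancel_left, norm_smul, Real.norm_eq_abs, abs_of_pos ht0]
    rw [this, ht]
    rw [div_mul_eq_mul_div, div_lt_iff₀ (by positivity)]
    nlinarith
  have hpc : y + t • (y - x₀) ∈ closure s := hball hp
  have h1t : (0:ℝ) < 1 + t := by linarith
  have hcombo : (1/(1+t)) • (y + t • (y - x₀)) + (t/(1+t)) • x₀ = y := by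
    match_scalars <;> field_simp <;> ring
  have := hs.combo_closure_interior_mem_interior hpc hx₀
    (by positivity : (0:ℝ) ≤ 1/(1+t)) (by positivity : (0:ℝ) < t/(1+t))
    (by field_simp)
  rwa [hcombo] at this

/-- **Function value convergence at the last iterate of iBPG** (Theorem 3.1(iii)). Under the
standing assumptions, if `(1/k) Σ_{i<k} i·η_i (‖x̃^{i+1}‖+‖x̃^i‖+1) → 0`,
`(1/k) Σ_{i<k} i·μ_i → 0` and `(1/k) Σ_{i<k} i·ν_i → 0`, then `F(x̃^k) → F*`, where `F = P + f`
and `F* = inf {F x : x ∈ Q} > −∞`. -/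
theorem iBPG_last_value_convergence
    {E : Type*} [NormedAddCommGroup E] [InnerProductSpace ℝ E] [FiniteDimensional ℝ E]
    (Q domφ domP domf X : Set E) (φ P f : E → ℝ) (gφ gf : E → E) (L : ℝ)
    (hstand : Standing Q domφ domP domf X φ P f gφ gf L)
    (η μ ν : ℕ → ℝ) (x xt : ℕ → E)
    (hiter : IBPGIter domφ domP X φ P gφ gf L η μ ν x xt)
    (Fstar : ℝ) (hFstar : IsGLB ((fun u => P u + f u) '' (domP ∩ domf ∩ Q)) Fstar)
    (h1 : Tendsto (fun k : ℕ =>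
            (k : ℝ)⁻¹ * ∑ i ∈ Finset.range k, (i : ℝ) * η i * (‖xt (i+1)‖ + ‖xt i‖ + 1))
          atTop (𝓝 0))
    (h2 : Tendsto (fun k : ℕ => (k : ℝ)⁻¹ * ∑ i ∈ Finset.range k, (i : ℝ) * μ i) atTop (𝓝 0))
    (h3 : Tendsto (fun k : ℕ => (k : ℝ)⁻¹ * ∑ i ∈ Finset.range k, (i : ℝ) * ν i) atTop (𝓝 0)) :
    Tendsto (fun k : ℕ => P (xt k) + f (xt k)) atTop (𝓝 Fstar) := by
  classical
  have hgφ := hstand.hφsmooth.2.1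
  have hxint : ∀ k, x k ∈ interior domφ := fun k => (hiter.hx k).2
  have hxX : ∀ k, x k ∈ X := fun k => (hiter.hx k).1
  have hxtP : ∀ k, xt k ∈ domP := fun k => (hiter.hxt k).1
  have hxtφ : ∀ k, xt k ∈ domφ := fun k => (hiter.hxt k).2
  have hbnn : ∀ u ∈ domφ, ∀ k, 0 ≤ breg φ gφ u (x k) := by
    intro u hu k
    have h := grad_ineq hstand.hφconv (interior_subset (hxint k)) (hgφ _ (hxint k)) hu
    simp only [breg]
    linarith
  -- The key one-step inequality
  have star : ∀ u ∈ domP ∩ domφ, ∀ k : ℕ,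
      P (xt (k+1)) + f (xt (k+1)) + L * breg φ gφ u (x (k+1)) ≤
      P u + f u + L * breg φ gφ u (x k) + L * μ k + ν k + η k * (‖u‖ + ‖xt (k+1)‖) := by
    rintro u ⟨huP, huφ⟩ k
    obtain ⟨d, hd, hΔ⟩ := hiter.hinex k
    set Δ := d + gf (x k) + L • (gφ (x (k+1)) - gφ (x k)) with hΔdef
    set w := u - xt (k+1) with hw
    have h1' : P (xt (k+1)) + ⟪d, w⟫ - ν k ≤ P u := hd u huP
    have h2' : f (x k) + ⟪gf (x k), u - x k⟫ ≤ f u :=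
      grad_ineq hstand.hfconv (hstand.hfdom (interior_subset (hxint k)))
        (hstand.hfgrad _ (hxint k)) (hstand.hfdom huφ)
    have h3' : f (xt (k+1)) ≤ f (x k) + ⟪gf (x k), xt (k+1) - x k⟫
        + L * breg φ gφ (xt (k+1)) (x k) :=
      hstand.hrel _ ⟨hxint k, hxX k⟩ _ ⟨hxtφ (k+1), hstand.hXsup ⟨hxtP (k+1), hxtφ (k+1)⟩⟩
    have h4' : -(η k * (‖u‖ + ‖xt (k+1)‖)) ≤ ⟪Δ, w⟫ := by
      have hcs := abs_real_inner_le_norm Δ w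
      have hnw : ‖w‖ ≤ ‖u‖ + ‖xt (k+1)‖ := norm_sub_le _ _
      have h5' : ‖Δ‖ * ‖w‖ ≤ η k * (‖u‖ + ‖xt (k+1)‖) :=
        mul_le_mul hΔ hnw (norm_nonneg _) (hiter.hη k)
      have := neg_abs_le ⟪Δ, w⟫
      linarith
    have h5 : ⟪Δ, w⟫ = ⟪d, w⟫ + ⟪gf (x k), w⟫ + L * ⟪gφ (x (k+1)) - gφ (x k), w⟫ := by
      rw [hΔdef]
      simp [inner_add_left, real_inner_smul_left]
    have h6 : ⟪gφ (x (k+1)) - gφ (x k), w⟫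
        = (breg φ gφ u (x k) - breg φ gφ u (x (k+1)))
          + (breg φ gφ (xt (k+1)) (x (k+1)) - breg φ gφ (xt (k+1)) (x k)) := by
      simp only [breg, hw, inner_sub_left, inner_sub_right]
      ring
    have h6' : L * ⟪gφ (x (k+1)) - gφ (x k), w⟫
        = L * breg φ gφ u (x k) - L * breg φ gφ u (x (k+1))
          + L * breg φ gφ (xt (k+1)) (x (k+1)) - L * breg φ gφ (xt (k+1)) (x k) := by
      rw [h6]; ring
    have h7 : L * breg φ gφ (xt (k+1)) (x (k+1)) ≤ L * μ k :=
      mul_le_mul_of_nonneg_left (hiter.hdist k) hstand.hLnn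
    have h8 : ⟪gf (x k), u - x k⟫ - ⟪gf (x k), xt (k+1) - x k⟫ = ⟪gf (x k), w⟫ := by
      simp only [hw, inner_sub_right]
      ring
    linarith
  -- one-step decrease with errors
  set δ : ℕ → ℝ := fun j => L * μ (j-1) + L * μ j + ν j
      + η j * (‖xt (j+1)‖ + ‖xt j‖ + 1) with hδ
  have hδnn : ∀ j, 0 ≤ δ j := by
    intro j
    have ha1 := mul_nonneg hstand.hLnn (hiter.hμ (j-1))
    have ha2 := mul_nonneg hstand.hLnn (hiter.hμ j)
    have ha3 := hiter.hν j
    have ha4 : 0 ≤ η j * (‖xt (j+1)‖ + ‖xt j‖ + 1) :=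
      mul_nonneg (hiter.hη j) (by positivity)
    simp only [hδ]
    linarith
  have hA : ∀ j, 1 ≤ j → P (xt (j+1)) + f (xt (j+1)) ≤ P (xt j) + f (xt j) + δ j := by
    intro j hj
    have hs := star (xt j) ⟨hxtP j, hxtφ j⟩ j
    have hD1 : 0 ≤ L * breg φ gφ (xt j) (x (j+1)) :=
      mul_nonneg hstand.hLnn (hbnn _ (hxtφ j) (j+1))
    have hpred : breg φ gφ (xt j) (x j) ≤ μ (j-1) := by
      have h := hiter.hdist (j-1)
      rwa [Nat.sub_add_cancel hj] at h
    have hpred' : L * breg φ gφ (xt j) (x j) ≤ L * μ (j-1) :=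
      mul_le_mul_of_nonneg_left hpred hstand.hLnn
    have hη' : η j * (‖xt j‖ + ‖xt (j+1)‖) ≤ η j * (‖xt (j+1)‖ + ‖xt j‖ + 1) := by
      have := hiter.hη j
      nlinarith
    simp only [hδ]
    linarith
  -- weighted averaging bound
  have hInd : ∀ k : ℕ, 1 ≤ k → (k:ℝ) * (P (xt k) + f (xt k)) ≤
      (∑ j ∈ Finset.Icc 1 k, (P (xt j) + f (xt j))) + ∑ i ∈ Finset.Ico 1 k, (i:ℝ) * δ i := by
    intro k hk
    induction k, hk using Nat.le_induction with
    | base => simp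
    | succ k hk ih =>
      have hstep := hA k hk
      have h2' : (k:ℝ) * (P (xt (k+1)) + f (xt (k+1)))
          ≤ (k:ℝ) * (P (xt k) + f (xt k)) + (k:ℝ) * δ k := by
        nlinarith [mul_le_mul_of_nonneg_left hstep (Nat.cast_nonneg (α := ℝ) k)]
      rw [Finset.sum_Icc_succ_top (by omega : 1 ≤ k+1), Finset.sum_Ico_succ_top hk]
      push_cast
      linarith
  -- telescoping bound for the averages
  have hTel : ∀ u ∈ domP ∩ domφ, ∀ k : ℕ,
      (∑ i ∈ Finset.range k, (P (xt (i+1)) + f (xt (i+1)))) + L * breg φ gφ u (x k)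
      ≤ (k:ℝ) * (P u + f u) + L * breg φ gφ u (x 0)
        + ∑ i ∈ Finset.range k, (L * μ i + ν i + η i * (‖u‖ + ‖xt (i+1)‖)) := by
    intro u hu k
    induction k with
    | zero => simp
    | succ k ih =>
      have hs := star u hu k
      rw [Finset.sum_range_succ, Finset.sum_range_succ]
      push_cast
      linarith
  -- combined bound
  have hmain : ∀ u ∈ domP ∩ domφ, ∀ k : ℕ, 1 ≤ k →
      P (xt k) + f (xt k) ≤ (P u + f u)
        + (k:ℝ)⁻¹ * (L * breg φ gφ u (x 0)
          + (∑ i ∈ Finset.range k, (L * μ i + ν i + η i * (‖u‖ + ‖xt (i+1)‖)))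
          + ∑ i ∈ Finset.Ico 1 k, (i:ℝ) * δ i) := by
    intro u hu k hk
    have hkpos : (0:ℝ) < (k:ℝ) := by exact_mod_cast hk
    have hIcc : ∑ j ∈ Finset.Icc 1 k, (P (xt j) + f (xt j))
        = ∑ i ∈ Finset.range k, (P (xt (i+1)) + f (xt (i+1))) := by
      rw [← Finset.Ico_add_one_right_eq_Icc, Finset.sum_Ico_eq_sum_range]
      refine Finset.sum_congr (by norm_num) fun i _ => by rw [Nat.add_comm]
    have hD : 0 ≤ L * breg φ gφ u (x k) := mul_nonneg hstand.hLnn (hbnn u hu.2 k)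
    have h3' : (k:ℝ) * (P (xt k) + f (xt k)) ≤ (k:ℝ) * (P u + f u)
        + (L * breg φ gφ u (x 0)
          + (∑ i ∈ Finset.range k, (L * μ i + ν i + η i * (‖u‖ + ‖xt (i+1)‖)))
          + ∑ i ∈ Finset.Ico 1 k, (i:ℝ) * δ i) := by
      have hI := hInd k hk
      have hT := hTel u hu k
      rw [hIcc] at hI
      linarith
    have h4' : P (xt k) + f (xt k)
        = (k:ℝ)⁻¹ * ((k:ℝ) * (P (xt k) + f (xt k))) := by
      field_simp
    rw [h4']
    calc (k:ℝ)⁻¹ * ((k:ℝ) * (P (xt k) + f (xt k)))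
        ≤ (k:ℝ)⁻¹ * ((k:ℝ) * (P u + f u)
          + (L * breg φ gφ u (x 0)
            + (∑ i ∈ Finset.range k, (L * μ i + ν i + η i * (‖u‖ + ‖xt (i+1)‖)))
            + ∑ i ∈ Finset.Ico 1 k, (i:ℝ) * δ i)) :=
          mul_le_mul_of_nonneg_left h3' (by positivity)
      _ = (P u + f u) + (k:ℝ)⁻¹ * (L * breg φ gφ u (x 0)
            + (∑ i ∈ Finset.range k, (L * μ i + ν i + η i * (‖u‖ + ‖xt (i+1)‖)))
            + ∑ i ∈ Finset.Ico 1 k, (i:ℝ) * δ i) := by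
          field_simp
  -- lower bound
  have hlb : ∀ k, Fstar ≤ P (xt k) + f (xt k) := by
    intro k
    have hmem : xt k ∈ domP ∩ domf ∩ Q :=
      ⟨⟨hxtP k, hstand.hfdom (hxtφ k)⟩, by rw [← hstand.hφQ]; exact subset_closure (hxtφ k)⟩
    exact hFstar.1 (Set.mem_image_of_mem _ hmem)
  -- Cesàro limits
  have hβnn : ∀ i, 0 ≤ η i * (‖xt (i+1)‖ + ‖xt i‖ + 1) := by
    intro i
    have := hiter.hη i
    positivity
  have hSβ : Tendsto (fun k : ℕ => (k:ℝ)⁻¹ *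
      ∑ i ∈ Finset.range k, (i:ℝ) * (η i * (‖xt (i+1)‖ + ‖xt i‖ + 1))) atTop (𝓝 0) := by
    simpa only [mul_assoc] using h1
  have hAβ := cesaro_of_weighted _ hβnn hSβ
  have hAμ := cesaro_of_weighted μ hiter.hμ h2
  have hAν := cesaro_of_weighted ν hiter.hν h3
  have hSμ' : Tendsto (fun k : ℕ => (k:ℝ)⁻¹ *
      ∑ i ∈ Finset.range k, ((i:ℝ)+1) * μ i) atTop (𝓝 0) := by
    have heq : (fun k : ℕ => (k:ℝ)⁻¹ * ∑ i ∈ Finset.range k, ((i:ℝ)+1) * μ i)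
        = fun k : ℕ => ((k:ℝ)⁻¹ * ∑ i ∈ Finset.range k, (i:ℝ) * μ i)
          + ((k:ℝ)⁻¹ * ∑ i ∈ Finset.range k, μ i) := by
      funext k
      rw [← mul_add, ← Finset.sum_add_distrib]
      congr 1
      exact Finset.sum_congr rfl fun i _ => by ring
    rw [heq]
    simpa using h2.add hAμ
  -- the convergence, via `tendsto_order`
  rw [tendsto_order]
  constructor
  · intro c hc
    filter_upwards with k
    exact lt_of_lt_of_le hc (hlb k)
  · intro c hc
    -- find a good comparison point u ∈ domP ∩ domφ with P u + f u < c
    obtain ⟨yv, hyv, -, hylt⟩ := hFstar.exists_between hc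
    obtain ⟨u₀, hu₀mem, hu₀eq⟩ := hyv
    have hylt' : P u₀ + f u₀ < c := by rw [show P u₀ + f u₀ = yv from hu₀eq]; exact hylt
    obtain ⟨z, hzP, hzQ⟩ := hstand.hPQ
    obtain ⟨x₀, hx₀⟩ := hstand.hφsmooth.1
    have hzφ : z ∈ interior domφ := by
      have hQint : interior Q = interior (closure domφ) := by rw [hstand.hφQ]
      exact interior_closure_subset_interior_of_convex hstand.hφconv.1 hx₀ (hQint ▸ hzQ)
    have hu₀P : u₀ ∈ domP := hu₀mem.1.1
    have hu₀f : u₀ ∈ domf := hu₀mem.1.2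
    have hu₀cl : u₀ ∈ closure domφ := by rw [hstand.hφQ]; exact hu₀mem.2
    set s0 : ℝ := (P z + f z) - (P u₀ + f u₀) with hs0
    set t : ℝ := min 1 ((c - (P u₀ + f u₀)) / (2 * (|s0| + 1))) with htdef
    have habs : (0:ℝ) ≤ |s0| := abs_nonneg _
    have hcpos : 0 < c - (P u₀ + f u₀) := by linarith [hylt']
    have ht0 : 0 < t := lt_min one_pos (div_pos hcpos (by positivity))
    have ht1 : t ≤ 1 := min_le_left _ _
    set u : E := t • z + (1-t) • u₀ with hudef
    have huP : u ∈ domP := hstand.hPconv.1 hzP hu₀P ht0.le (by linarith) (by ring)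
    have huφ : u ∈ interior domφ :=
      hstand.hφconv.1.combo_interior_closure_mem_interior hzφ hu₀cl ht0 (by linarith) (by ring)
    have hPu : P u ≤ t * P z + (1-t) * P u₀ := by
      have := hstand.hPconv.2 hzP hu₀P ht0.le (by linarith : (0:ℝ) ≤ 1 - t) (by ring)
      simpa [smul_eq_mul] using this
    have hfu : f u ≤ t * f z + (1-t) * f u₀ := by
      have := hstand.hfconv.2 (hstand.hfdom (interior_subset hzφ)) hu₀f ht0.le
        (by linarith : (0:ℝ) ≤ 1 - t) (by ring)
      simpa [smul_eq_mul] using this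
    have hFu : P u + f u < c := by
      have hle1 : P u + f u ≤ (P u₀ + f u₀) + t * s0 := by
        simp only [hs0]; nlinarith
      have hle2 : t * s0 ≤ t * |s0| := mul_le_mul_of_nonneg_left (le_abs_self _) ht0.le
      have hle3 : t * |s0| ≤ ((c - (P u₀ + f u₀)) / (2 * (|s0| + 1))) * |s0| :=
        mul_le_mul_of_nonneg_right (min_le_right _ _) habs
      have hle4 : ((c - (P u₀ + f u₀)) / (2 * (|s0| + 1))) * |s0| ≤ (c - (P u₀ + f u₀))/2 := by
        rw [div_mul_eq_mul_div, div_le_div_iff₀ (by positivity) two_pos]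
        nlinarith
      linarith
    -- the error terms for this u tend to zero
    have huu : u ∈ domP ∩ domφ := ⟨huP, interior_subset huφ⟩
    set C0 : ℝ := L * breg φ gφ u (x 0) with hC0def
    have hVle : ∀ k : ℕ, ∑ i ∈ Finset.range k, (L * μ i + ν i + η i * (‖u‖ + ‖xt (i+1)‖))
        ≤ L * (∑ i ∈ Finset.range k, μ i) + (∑ i ∈ Finset.range k, ν i)
          + (‖u‖+1) * ∑ i ∈ Finset.range k, η i * (‖xt (i+1)‖ + ‖xt i‖ + 1) := by
      intro k
      calc ∑ i ∈ Finset.range k, (L * μ i + ν i + η i * (‖u‖ + ‖xt (i+1)‖))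
          ≤ ∑ i ∈ Finset.range k,
              (L * μ i + ν i + (‖u‖+1) * (η i * (‖xt (i+1)‖ + ‖xt i‖ + 1))) := by
            refine Finset.sum_le_sum fun i _ => ?_
            have hterm : η i * (‖u‖ + ‖xt (i+1)‖)
                ≤ (‖u‖+1) * (η i * (‖xt (i+1)‖ + ‖xt i‖ + 1)) := by
              have h9 : ‖u‖ + ‖xt (i+1)‖ ≤ (‖u‖+1) * (‖xt (i+1)‖ + ‖xt i‖ + 1) := by
                nlinarith [norm_nonneg u, norm_nonneg (xt i), norm_nonneg (xt (i+1))]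
              calc η i * (‖u‖ + ‖xt (i+1)‖)
                  ≤ η i * ((‖u‖+1) * (‖xt (i+1)‖ + ‖xt i‖ + 1)) :=
                    mul_le_mul_of_nonneg_left h9 (hiter.hη i)
                _ = (‖u‖+1) * (η i * (‖xt (i+1)‖ + ‖xt i‖ + 1)) := by ring
            linarith
        _ = L * (∑ i ∈ Finset.range k, μ i) + (∑ i ∈ Finset.range k, ν i)
            + (‖u‖+1) * ∑ i ∈ Finset.range k, η i * (‖xt (i+1)‖ + ‖xt i‖ + 1) := by
            rw [Finset.sum_add_distrib, Finset.sum_add_distrib, Finset.mul_sum, Finset.mul_sum]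
    have hWle : ∀ k : ℕ, ∑ i ∈ Finset.Ico 1 k, (i:ℝ) * δ i
        ≤ L * (∑ i ∈ Finset.range k, ((i:ℝ)+1) * μ i)
          + L * (∑ i ∈ Finset.range k, (i:ℝ) * μ i)
          + (∑ i ∈ Finset.range k, (i:ℝ) * ν i)
          + ∑ i ∈ Finset.range k, (i:ℝ) * (η i * (‖xt (i+1)‖ + ‖xt i‖ + 1)) := by
      intro k
      have hIsub : Finset.Ico 1 k ⊆ Finset.range k := by
        intro i hi
        simp only [Finset.mem_Ico] at hi
        simp only [Finset.mem_range]
        omega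
      have hsplit : ∑ i ∈ Finset.Ico 1 k, (i:ℝ) * δ i
          = (∑ i ∈ Finset.Ico 1 k, L * ((i:ℝ) * μ (i-1)))
            + (∑ i ∈ Finset.Ico 1 k, L * ((i:ℝ) * μ i))
            + (∑ i ∈ Finset.Ico 1 k, (i:ℝ) * ν i)
            + ∑ i ∈ Finset.Ico 1 k, (i:ℝ) * (η i * (‖xt (i+1)‖ + ‖xt i‖ + 1)) := by
        rw [← Finset.sum_add_distrib, ← Finset.sum_add_distrib, ← Finset.sum_add_distrib]
        refine Finset.sum_congr rfl fun i _ => ?_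
        simp only [hδ]
        ring
      have hS1 : ∑ i ∈ Finset.Ico 1 k, L * ((i:ℝ) * μ (i-1))
          ≤ L * ∑ i ∈ Finset.range k, ((i:ℝ)+1) * μ i := by
        rw [Finset.sum_Ico_eq_sum_range, ← Finset.mul_sum]
        refine mul_le_mul_of_nonneg_left ?_ hstand.hLnn
        have hre : ∀ j, ((1+j:ℕ):ℝ) * μ (1+j-1) = ((j:ℝ)+1) * μ j := by
          intro j
          have hj : 1+j-1 = j := by omega
          rw [hj]
          push_cast
          ring
        calc ∑ j ∈ Finset.range (k-1), ((1+j:ℕ):ℝ) * μ (1+j-1)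
            = ∑ j ∈ Finset.range (k-1), ((j:ℝ)+1) * μ j :=
              Finset.sum_congr rfl fun j _ => hre j
          _ ≤ ∑ j ∈ Finset.range k, ((j:ℝ)+1) * μ j := by
              refine Finset.sum_le_sum_of_subset_of_nonneg
                (Finset.range_subset_range.2 (by omega)) fun j _ _ => ?_
              have := hiter.hμ j
              positivity
      have hS2 : ∑ i ∈ Finset.Ico 1 k, L * ((i:ℝ) * μ i)
          ≤ L * ∑ i ∈ Finset.range k, (i:ℝ) * μ i := by
        rw [← Finset.mul_sum]
        refine mul_le_mul_of_nonneg_left ?_ hstand.hLnn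
        refine Finset.sum_le_sum_of_subset_of_nonneg hIsub fun j _ _ => ?_
        have := hiter.hμ j
        positivity
      have hS3 : ∑ i ∈ Finset.Ico 1 k, (i:ℝ) * ν i ≤ ∑ i ∈ Finset.range k, (i:ℝ) * ν i := by
        refine Finset.sum_le_sum_of_subset_of_nonneg hIsub fun j _ _ => ?_
        have := hiter.hν j
        positivity
      have hS4 : ∑ i ∈ Finset.Ico 1 k, (i:ℝ) * (η i * (‖xt (i+1)‖ + ‖xt i‖ + 1))
          ≤ ∑ i ∈ Finset.range k, (i:ℝ) * (η i * (‖xt (i+1)‖ + ‖xt i‖ + 1)) := by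
        refine Finset.sum_le_sum_of_subset_of_nonneg hIsub fun j _ _ => ?_
        have := hβnn j
        positivity
      rw [hsplit]
      linarith
    -- limits of the majorants
    have hC0 : Tendsto (fun k : ℕ => (k:ℝ)⁻¹ * C0) atTop (𝓝 0) := by
      simpa using tendsto_inv_atTop_nhds_zero_nat.mul_const C0
    have hV : Tendsto (fun k : ℕ => (k:ℝ)⁻¹ *
        (L * (∑ i ∈ Finset.range k, μ i) + (∑ i ∈ Finset.range k, ν i)
          + (‖u‖+1) * ∑ i ∈ Finset.range k, η i * (‖xt (i+1)‖ + ‖xt i‖ + 1))) atTop (𝓝 0) := by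
      have hcomb := (hAμ.const_mul L).add (hAν.add (hAβ.const_mul (‖u‖+1)))
      simp only [mul_zero, add_zero, zero_add] at hcomb
      convert hcomb using 2 with k
      ring
    have hU : Tendsto (fun k : ℕ => (k:ℝ)⁻¹ *
        (L * (∑ i ∈ Finset.range k, ((i:ℝ)+1) * μ i)
          + L * (∑ i ∈ Finset.range k, (i:ℝ) * μ i)
          + (∑ i ∈ Finset.range k, (i:ℝ) * ν i)
          + ∑ i ∈ Finset.range k, (i:ℝ) * (η i * (‖xt (i+1)‖ + ‖xt i‖ + 1)))) atTop (𝓝 0) := by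
      have hcomb := ((hSμ'.const_mul L).add (h2.const_mul L)).add (h3.add hSβ)
      simp only [mul_zero, add_zero, zero_add] at hcomb
      convert hcomb using 2 with k
      ring
    have hg : Tendsto (fun k : ℕ => (k:ℝ)⁻¹ * C0
        + (k:ℝ)⁻¹ * (L * (∑ i ∈ Finset.range k, μ i) + (∑ i ∈ Finset.range k, ν i)
          + (‖u‖+1) * ∑ i ∈ Finset.range k, η i * (‖xt (i+1)‖ + ‖xt i‖ + 1))
        + (k:ℝ)⁻¹ * (L * (∑ i ∈ Finset.range k, ((i:ℝ)+1) * μ i)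
          + L * (∑ i ∈ Finset.range k, (i:ℝ) * μ i)
          + (∑ i ∈ Finset.range k, (i:ℝ) * ν i)
          + ∑ i ∈ Finset.range k, (i:ℝ) * (η i * (‖xt (i+1)‖ + ‖xt i‖ + 1)))) atTop (𝓝 0) := by
      simpa using (hC0.add hV).add hU
    have hε : (0:ℝ) < c - (P u + f u) := by linarith
    filter_upwards [hg.eventually (gt_mem_nhds hε), eventually_ge_atTop 1] with k hgk hk1
    have hmaink := hmain u huu k hk1
    have hkinv : (0:ℝ) ≤ (k:ℝ)⁻¹ := by positivity
    have hsum_le : (k:ℝ)⁻¹ * (C0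
        + (∑ i ∈ Finset.range k, (L * μ i + ν i + η i * (‖u‖ + ‖xt (i+1)‖)))
        + ∑ i ∈ Finset.Ico 1 k, (i:ℝ) * δ i)
        ≤ (k:ℝ)⁻¹ * C0
          + (k:ℝ)⁻¹ * (L * (∑ i ∈ Finset.range k, μ i) + (∑ i ∈ Finset.range k, ν i)
            + (‖u‖+1) * ∑ i ∈ Finset.range k, η i * (‖xt (i+1)‖ + ‖xt i‖ + 1))
          + (k:ℝ)⁻¹ * (L * (∑ i ∈ Finset.range k, ((i:ℝ)+1) * μ i)
            + L * (∑ i ∈ Finset.range k, (i:ℝ) * μ i)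
            + (∑ i ∈ Finset.range k, (i:ℝ) * ν i)
            + ∑ i ∈ Finset.range k, (i:ℝ) * (η i * (‖xt (i+1)‖ + ‖xt i‖ + 1))) := by
      have hv := hVle k
      have hw := hWle k
      have h := mul_le_mul_of_nonneg_left (add_le_add (add_le_add (le_refl C0) hv) hw) hkinv
      linarith [h]
    calc P (xt k) + f (xt k) ≤ (P u + f u) + (k:ℝ)⁻¹ * (C0
          + (∑ i ∈ Finset.range k, (L * μ i + ν i + η i * (‖u‖ + ‖xt (i+1)‖)))
          + ∑ i ∈ Finset.Ico 1 k, (i:ℝ) * δ i) := hmaink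
      _ < c := by linarith
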